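/- Let h₁, h₂ be independent nonnegative random variables with E[h₁] = E[h₂] = 1 and E[h₁²] = E[h₂²] < ∞, and let 0 < ρ < 1/2. Then E[log₂(1 + ρh₁ + ρh₂)] + log₂(E[(1+ρh₁)/(1+ρh₁+ρh₂)] · E[1/(1+ρh₁)]) ≤ (log₂ e)(1 + 2E[h₁²]) ρ². -/

import Mathlib

open Real MeasureTheory

/-- Two-user MAC low-SNR gap bound: for independent nonnegative `h₁, h₂` with unit
means and equal finite second moments, and `0 < ρ < 1/2`,
`E[log₂(1+ρh₁+ρh₂)] + log₂(E[(1+ρh₁)/(1+ρh₁+ρh₂)] E[1/(1+ρh₁)]) ≤ (log₂ e)(1+2E[h₁²])ρ²`. -/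
theorem mac_low_snr_gap {Ω : Type*} [MeasurableSpace Ω] (μ : Measure Ω) [IsProbabilityMeasure μ]
    (h₁ h₂ : Ω → ℝ) (hpos₁ : ∀ ω, 0 ≤ h₁ ω) (hpos₂ : ∀ ω, 0 ≤ h₂ ω)
    (hindep : ProbabilityTheory.IndepFun h₁ h₂ μ)
    (hInt₁ : Integrable h₁ μ) (hInt₂ : Integrable h₂ μ)
    (hmean₁ : (∫ ω, h₁ ω ∂μ) = 1) (hmean₂ : (∫ ω, h₂ ω ∂μ) = 1)
    (hIntsq₁ : Integrable (fun ω => (h₁ ω) ^ 2) μ)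
    (hIntsq₂ : Integrable (fun ω => (h₂ ω) ^ 2) μ)
    (hsqeq : (∫ ω, (h₁ ω) ^ 2 ∂μ) = ∫ ω, (h₂ ω) ^ 2 ∂μ)
    (ρ : ℝ) (hρ0 : 0 < ρ) (hρ : ρ < 1 / 2)
    (hIntlog : Integrable (fun ω => Real.logb 2 (1 + ρ * h₁ ω + ρ * h₂ ω)) μ)
    (hIntratio : Integrable (fun ω => (1 + ρ * h₁ ω) / (1 + ρ * h₁ ω + ρ * h₂ ω)) μ)
    (hIntinv : Integrable (fun ω => 1 / (1 + ρ * h₁ ω)) μ) :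
    (∫ ω, Real.logb 2 (1 + ρ * h₁ ω + ρ * h₂ ω) ∂μ)
        + Real.logb 2 ((∫ ω, (1 + ρ * h₁ ω) / (1 + ρ * h₁ ω + ρ * h₂ ω) ∂μ)
            * ∫ ω, 1 / (1 + ρ * h₁ ω) ∂μ)
      ≤ Real.logb 2 (Real.exp 1) * (1 + 2 * ∫ ω, (h₁ ω) ^ 2 ∂μ) * ρ ^ 2 := by
  have hL2 : (0:ℝ) < Real.log 2 := Real.log_pos (by norm_num)
  set E₁ := ∫ ω, (h₁ ω) ^ 2 ∂μ with hE₁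
  set E₂ := ∫ ω, (h₂ ω) ^ 2 ∂μ with hE₂
  -- positivity of denominators
  have hA : ∀ ω, (0:ℝ) < 1 + ρ * h₁ ω := fun ω => by nlinarith [hpos₁ ω]
  have hS : ∀ ω, (0:ℝ) < 1 + ρ * h₁ ω + ρ * h₂ ω := fun ω => by
    nlinarith [hpos₁ ω, hpos₂ ω]
  -- h₁ h₂ product
  have hIntmul : Integrable (fun ω => h₁ ω * h₂ ω) μ := hindep.integrable_mul hInt₁ hInt₂
  have hmul : (∫ ω, h₁ ω * h₂ ω ∂μ) = 1 := by
    have := hindep.integral_mul_eq_mul_integral hInt₁.1 hInt₂.1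
    simpa [Pi.mul_apply, hmean₁, hmean₂] using this
  -- Step A : E[log₂ S] ≤ 2ρ / log 2
  have stepA : (∫ ω, Real.logb 2 (1 + ρ * h₁ ω + ρ * h₂ ω) ∂μ)
      ≤ (2 * ρ) / Real.log 2 := by
    have hIntg : Integrable (fun ω => (ρ * h₁ ω + ρ * h₂ ω) / Real.log 2) μ :=
      (((hInt₁.const_mul ρ).add (hInt₂.const_mul ρ)).div_const _)
    have hmono : (∫ ω, Real.logb 2 (1 + ρ * h₁ ω + ρ * h₂ ω) ∂μ)
        ≤ ∫ ω, (ρ * h₁ ω + ρ * h₂ ω) / Real.log 2 ∂μ := by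
      refine integral_mono hIntlog hIntg fun ω => ?_
      have hlog : Real.log (1 + ρ * h₁ ω + ρ * h₂ ω) ≤ ρ * h₁ ω + ρ * h₂ ω := by
        have := Real.log_le_sub_one_of_pos (hS ω)
        linarith
      rw [Real.logb]
      gcongr
    calc (∫ ω, Real.logb 2 (1 + ρ * h₁ ω + ρ * h₂ ω) ∂μ)
        ≤ ∫ ω, (ρ * h₁ ω + ρ * h₂ ω) / Real.log 2 ∂μ := hmono
      _ = ((∫ ω, ρ * h₁ ω + ρ * h₂ ω ∂μ)) / Real.log 2 := by
          rw [integral_div]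
      _ = (2 * ρ) / Real.log 2 := by
          rw [integral_add (hInt₁.const_mul ρ) (hInt₂.const_mul ρ),
            integral_const_mul, integral_const_mul, hmean₁, hmean₂]
          ring_nf
  -- P and Q
  set P := ∫ ω, (1 + ρ * h₁ ω) / (1 + ρ * h₁ ω + ρ * h₂ ω) ∂μ with hP
  set Q := ∫ ω, 1 / (1 + ρ * h₁ ω) ∂μ with hQ
  have hPpos : 0 < P := by
    rw [hP, integral_pos_iff_support_of_nonneg
      (fun ω => le_of_lt (div_pos (hA ω) (hS ω))) hIntratio]
    have hsupp : Function.support (fun ω => (1 + ρ * h₁ ω) / (1 + ρ * h₁ ω + ρ * h₂ ω))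
        = Set.univ := Set.eq_univ_iff_forall.mpr fun ω => (div_pos (hA ω) (hS ω)).ne'
    rw [hsupp]; simp
  have hQpos : 0 < Q := by
    rw [hQ, integral_pos_iff_support_of_nonneg
      (fun ω => le_of_lt (one_div_pos.mpr (hA ω))) hIntinv]
    have hsupp : Function.support (fun ω => (1:ℝ) / (1 + ρ * h₁ ω))
        = Set.univ := Set.eq_univ_iff_forall.mpr fun ω => (one_div_pos.mpr (hA ω)).ne'
    rw [hsupp]; simp
  -- Step C : P ≤ 1 - ρ + ρ² + ρ² E₂
  have stepC : P ≤ 1 - ρ + ρ ^ 2 + ρ ^ 2 * E₂ := by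
    have i1 : Integrable (fun ω => 1 - ρ * h₂ ω) μ := by
      exact (integrable_const 1).sub (hInt₂.const_mul ρ)
    have i2 : Integrable (fun ω => ρ ^ 2 * (h₁ ω * h₂ ω)) μ := hIntmul.const_mul _
    have i3 : Integrable (fun ω => ρ ^ 2 * (h₂ ω) ^ 2) μ := hIntsq₂.const_mul _
    have i12 : Integrable (fun ω => 1 - ρ * h₂ ω + ρ ^ 2 * (h₁ ω * h₂ ω)) μ := by
      exact i1.add i2
    have hIntg : Integrable
        (fun ω => 1 - ρ * h₂ ω + ρ ^ 2 * (h₁ ω * h₂ ω) + ρ ^ 2 * (h₂ ω) ^ 2) μ := by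
      exact i12.add i3
    have hmono : P ≤ ∫ ω, 1 - ρ * h₂ ω + ρ ^ 2 * (h₁ ω * h₂ ω) + ρ ^ 2 * (h₂ ω) ^ 2 ∂μ := by
      refine integral_mono hIntratio hIntg fun ω => ?_
      have ha := mul_nonneg hρ0.le (hpos₁ ω)
      have hb := mul_nonneg hρ0.le (hpos₂ ω)
      rw [div_le_iff₀ (hS ω)]
      nlinarith [hS ω, mul_nonneg ha hb, mul_nonneg hb hb]
    calc P ≤ _ := hmono
      _ = 1 - ρ + ρ ^ 2 + ρ ^ 2 * E₂ := by
        rw [integral_add i12 i3, integral_add i1 i2,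
          integral_sub (integrable_const 1) (hInt₂.const_mul ρ),
          integral_const_mul, integral_const_mul, integral_const_mul, hmean₂, hmul]
        simp [hE₂]
  -- Step D : Q ≤ 1 - ρ + ρ² E₁
  have stepD : Q ≤ 1 - ρ + ρ ^ 2 * E₁ := by
    have j1 : Integrable (fun ω => 1 - ρ * h₁ ω) μ := by
      exact (integrable_const 1).sub (hInt₁.const_mul ρ)
    have j2 : Integrable (fun ω => ρ ^ 2 * (h₁ ω) ^ 2) μ := hIntsq₁.const_mul _
    have hIntg : Integrable (fun ω => 1 - ρ * h₁ ω + ρ ^ 2 * (h₁ ω) ^ 2) μ := by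
      exact j1.add j2
    have hmono : Q ≤ ∫ ω, 1 - ρ * h₁ ω + ρ ^ 2 * (h₁ ω) ^ 2 ∂μ := by
      refine integral_mono hIntinv hIntg fun ω => ?_
      have ha := mul_nonneg hρ0.le (hpos₁ ω)
      rw [div_le_iff₀ (hA ω)]
      nlinarith [mul_nonneg (mul_nonneg ha ha) ha]
    calc Q ≤ _ := hmono
      _ = 1 - ρ + ρ ^ 2 * E₁ := by
        rw [integral_add j1 j2,
          integral_sub (integrable_const 1) (hInt₁.const_mul ρ),
          integral_const_mul, integral_const_mul, hmean₁]
        simp [hE₁]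
  -- bound logs of P and Q
  have hlogP : Real.log P ≤ -ρ + ρ ^ 2 + ρ ^ 2 * E₂ := by
    have := Real.log_le_sub_one_of_pos hPpos
    linarith
  have hlogQ : Real.log Q ≤ -ρ + ρ ^ 2 * E₁ := by
    have := Real.log_le_sub_one_of_pos hQpos
    linarith
  have hlogPQ : Real.logb 2 (P * Q) ≤ (-2 * ρ + ρ ^ 2 + ρ ^ 2 * E₂ + ρ ^ 2 * E₁) / Real.log 2 := by
    rw [Real.logb, Real.log_mul (ne_of_gt hPpos) (ne_of_gt hQpos)]
    have : Real.log P + Real.log Q ≤ -2 * ρ + ρ ^ 2 + ρ ^ 2 * E₂ + ρ ^ 2 * E₁ := by linarith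
    exact div_le_div_of_nonneg_right this hL2.le
  -- finish
  have hRHS : Real.logb 2 (Real.exp 1) * (1 + 2 * E₁) * ρ ^ 2
      = (ρ ^ 2 + ρ ^ 2 * E₂ + ρ ^ 2 * E₁) / Real.log 2 := by
    rw [Real.logb, Real.log_exp, ← hsqeq]
    field_simp
    ring
  rw [hRHS]
  have := add_le_add stepA hlogPQ
  calc (∫ ω, Real.logb 2 (1 + ρ * h₁ ω + ρ * h₂ ω) ∂μ) + Real.logb 2 (P * Q)
      ≤ (2 * ρ) / Real.log 2 + (-2 * ρ + ρ ^ 2 + ρ ^ 2 * E₂ + ρ ^ 2 * E₁) / Real.log 2 := this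
    _ = (ρ ^ 2 + ρ ^ 2 * E₂ + ρ ^ 2 * E₁) / Real.log 2 := by
        rw [← add_div]; ring_nf
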